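/- Let (R, C, M_R, M_C) be a win-lose bimatrix game and let S_R ⊆ R, S_C ⊆ C be nonempty sets with no arcs entering S_R ∪ S_C from outside in the associated digraph, i.e., M_R(r,c) = 0 for every r ∈ R∖S_R and c ∈ S_C, and M_C(r,c) = 0 for every c ∈ C∖S_C and r ∈ S_R. If (x, y) is a Nash equilibrium of the restricted game with strategy sets S_R, S_C and payoff matrices the restrictions of M_R and M_C to S_R × S_C, then the pair of mixed strategies on R and C obtained from (x, y) by extending with probability 0 outside S_R and S_C is a Nash equilibrium of the full game. -/
import Mathlib


open Finset in
/-- `x` is a mixed strategy: a probability distribution on the finite strategy set `S`. -/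
def IsMixed {S : Type*} [Fintype S] (x : S → ℝ) : Prop :=
  (∀ s, 0 ≤ x s) ∧ ∑ s, x s = 1

open Finset in
/-- `(x, y)` is a Nash equilibrium of the bimatrix game `(MR, MC)`. -/
def IsNash {R C : Type*} [Fintype R] [Fintype C]
    (MR MC : R → C → ℝ) (x : R → ℝ) (y : C → ℝ) : Prop :=
  IsMixed x ∧ IsMixed y ∧
  (∀ x' : R → ℝ, IsMixed x' →
    ∑ r, ∑ c, x' r * MR r c * y c ≤ ∑ r, ∑ c, x r * MR r c * y c) ∧
  (∀ y' : C → ℝ, IsMixed y' →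
    ∑ r, ∑ c, x r * MC r c * y' c ≤ ∑ r, ∑ c, x r * MC r c * y c)

open Finset in
lemma sum_eq_sum_subtype_aux {S : Type*} [Fintype S] (T : Finset S) (f : S → ℝ)
    (h : ∀ s ∉ T, f s = 0) : ∑ s, f s = ∑ s : T, f s.1 := by
  rw [Finset.sum_coe_sort T f]
  exact (Finset.sum_subset (Finset.subset_univ T) (fun s _ hs => h s hs)).symm

open Finset in
lemma opt_of_submass_aux {S : Type*} [Fintype S] [DecidableEq S] [Nonempty S]
    (A : S → ℝ) (hA : ∀ s, 0 ≤ A s) (w : S → ℝ)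
    (hopt : ∀ w', IsMixed w' → ∑ s, w' s * A s ≤ ∑ s, w s * A s)
    (w' : S → ℝ) (hnn : ∀ s, 0 ≤ w' s) (hm : ∑ s, w' s ≤ 1) :
    ∑ s, w' s * A s ≤ ∑ s, w s * A s := by
  obtain ⟨s0⟩ := ‹Nonempty S›
  set m := ∑ s, w' s with hmdef
  set w'' : S → ℝ := fun s => w' s + (if s = s0 then 1 - m else 0) with hw''
  have hmix : IsMixed w'' := by
    constructor
    · intro s
      by_cases hs : s = s0 <;> simp [hw'', hs] <;> [linarith [hnn s0]; exact hnn s]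
    · simp only [hw'', Finset.sum_add_distrib, Finset.sum_ite_eq', Finset.mem_univ, if_true]
      rw [← hmdef]; ring
  have h1 : ∑ s, w' s * A s ≤ ∑ s, w'' s * A s := by
    apply Finset.sum_le_sum
    intro s _
    apply mul_le_mul_of_nonneg_right _ (hA s)
    have : (0 : ℝ) ≤ if s = s0 then 1 - m else 0 := by
      split <;> linarith
    simp only [hw'']; linarith
  exact le_trans h1 (hopt w'' hmix)

/-- If no arcs of the digraph associated to a win-lose game enter `S_R ∪ S_C` from
outside, then any Nash equilibrium of the game restricted to `S_R × S_C`, extended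
by zero outside `S_R` and `S_C`, is a Nash equilibrium of the full game. -/
theorem nash_of_undominated_subgame_extends
    {R C : Type*} [Fintype R] [Fintype C] [DecidableEq R] [DecidableEq C]
    (MR MC : R → C → ℝ)
    (h01R : ∀ r c, MR r c = 0 ∨ MR r c = 1)
    (h01C : ∀ r c, MC r c = 0 ∨ MC r c = 1)
    (SR : Finset R) (SC : Finset C) (hSR : SR.Nonempty) (hSC : SC.Nonempty)
    (hinR : ∀ r ∉ SR, ∀ c ∈ SC, MR r c = 0)
    (hinC : ∀ c ∉ SC, ∀ r ∈ SR, MC r c = 0)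
    (x : {r // r ∈ SR} → ℝ) (y : {c // c ∈ SC} → ℝ)
    (hnash : IsNash (fun r c => MR r.1 c.1) (fun r c => MC r.1 c.1) x y) :
    IsNash MR MC (fun r => if h : r ∈ SR then x ⟨r, h⟩ else 0)
      (fun c => if h : c ∈ SC then y ⟨c, h⟩ else 0) := by
  obtain ⟨⟨hxnn, hxsum⟩, ⟨hynn, hysum⟩, hxopt, hyopt⟩ := hnash
  have hMRnn : ∀ r c, (0:ℝ) ≤ MR r c := fun r c => by rcases h01R r c with h | h <;> rw [h] <;> norm_num
  have hMCnn : ∀ r c, (0:ℝ) ≤ MC r c := fun r c => by rcases h01C r c with h | h <;> rw [h] <;> norm_num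
  haveI : Nonempty {r // r ∈ SR} := ⟨⟨hSR.choose, hSR.choose_spec⟩⟩
  haveI : Nonempty {c // c ∈ SC} := ⟨⟨hSC.choose, hSC.choose_spec⟩⟩
  set xbar : R → ℝ := fun r => if h : r ∈ SR then x ⟨r, h⟩ else 0 with hxbar
  set ybar : C → ℝ := fun c => if h : c ∈ SC then y ⟨c, h⟩ else 0 with hybar
  have hxbar_sub : ∀ r : {r // r ∈ SR}, xbar r.1 = x r := by
    intro r; simp only [hxbar]; rw [dif_pos r.2]
  have hybar_sub : ∀ c : {c // c ∈ SC}, ybar c.1 = y c := by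
    intro c; simp only [hybar]; rw [dif_pos c.2]
  have hxbar_mix : IsMixed xbar := by
    constructor
    · intro r; simp only [hxbar]; split
      · exact hxnn _
      · exact le_refl 0
    · rw [sum_eq_sum_subtype_aux SR xbar (fun r hr => dif_neg hr)]
      rw [Finset.sum_congr rfl (fun r _ => hxbar_sub r)]
      exact hxsum
  have hybar_mix : IsMixed ybar := by
    constructor
    · intro c; simp only [hybar]; split
      · exact hynn _
      · exact le_refl 0
    · rw [sum_eq_sum_subtype_aux SC ybar (fun c hc => dif_neg hc)]
      rw [Finset.sum_congr rfl (fun c _ => hybar_sub c)]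
      exact hysum
  -- reduction of full sums for the row player (variable x'):
  have redL : ∀ (M : R → C → ℝ), (∀ r ∉ SR, ∀ c ∈ SC, M r c = 0) → ∀ x' : R → ℝ,
      (∑ r, ∑ c, x' r * M r c * ybar c) =
        ∑ r : {r // r ∈ SR}, x' r.1 * ∑ c : {c // c ∈ SC}, M r.1 c.1 * y c := by
    intro M hM x'
    have inner : ∀ r : R, ∑ c, x' r * M r c * ybar c
        = ∑ c : {c // c ∈ SC}, x' r * M r c.1 * y c := by
      intro r
      rw [sum_eq_sum_subtype_aux SC (fun c => x' r * M r c * ybar c)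
        (fun c hc => by simp only [hybar]; rw [dif_neg hc, mul_zero])]
      exact Finset.sum_congr rfl (fun c _ => by rw [hybar_sub c])
    calc ∑ r, ∑ c, x' r * M r c * ybar c
        = ∑ r, ∑ c : {c // c ∈ SC}, x' r * M r c.1 * y c :=
          Finset.sum_congr rfl (fun r _ => inner r)
      _ = ∑ r : {r // r ∈ SR}, ∑ c : {c // c ∈ SC}, x' r.1 * M r.1 c.1 * y c := by
          apply sum_eq_sum_subtype_aux SR
          intro r hr
          apply Finset.sum_eq_zero
          intro c _
          rw [hM r hr c.1 c.2, mul_zero, zero_mul]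
      _ = ∑ r : {r // r ∈ SR}, x' r.1 * ∑ c : {c // c ∈ SC}, M r.1 c.1 * y c := by
          apply Finset.sum_congr rfl
          intro r _
          rw [Finset.mul_sum]
          exact Finset.sum_congr rfl (fun c _ => by ring)
  -- reduction of full sums for the column player (variable y'):
  have redR : ∀ (M : R → C → ℝ), (∀ c ∉ SC, ∀ r ∈ SR, M r c = 0) → ∀ y' : C → ℝ,
      (∑ r, ∑ c, xbar r * M r c * y' c) =
        ∑ c : {c // c ∈ SC}, y' c.1 * ∑ r : {r // r ∈ SR}, x r * M r.1 c.1 := by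
    intro M hM y'
    calc ∑ r, ∑ c, xbar r * M r c * y' c
        = ∑ r : {r // r ∈ SR}, ∑ c, x r * M r.1 c * y' c := by
          rw [sum_eq_sum_subtype_aux SR (fun r => ∑ c, xbar r * M r c * y' c)
            (fun r hr => by
              apply Finset.sum_eq_zero
              intro c _
              simp only [hxbar]; rw [dif_neg hr, zero_mul, zero_mul])]
          apply Finset.sum_congr rfl
          intro r _
          exact Finset.sum_congr rfl (fun c _ => by rw [hxbar_sub r])
      _ = ∑ r : {r // r ∈ SR}, ∑ c : {c // c ∈ SC}, x r * M r.1 c.1 * y' c.1 := by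
          apply Finset.sum_congr rfl
          intro r _
          apply sum_eq_sum_subtype_aux SC
          intro c hc
          rw [hM c hc r.1 r.2, mul_zero, zero_mul]
      _ = ∑ c : {c // c ∈ SC}, y' c.1 * ∑ r : {r // r ∈ SR}, x r * M r.1 c.1 := by
          rw [Finset.sum_comm]
          apply Finset.sum_congr rfl
          intro c _
          rw [Finset.mul_sum]
          exact Finset.sum_congr rfl (fun r _ => by ring)
  refine ⟨hxbar_mix, hybar_mix, ?_, ?_⟩
  · -- row player optimality
    intro x' hx'
    rw [redL MR hinR x', redL MR hinR xbar]
    simp only [hxbar_sub]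
    apply opt_of_submass_aux (fun r : {r // r ∈ SR} => ∑ c : {c // c ∈ SC}, MR r.1 c.1 * y c)
    · intro s
      exact Finset.sum_nonneg (fun c _ => mul_nonneg (hMRnn _ _) (hynn c))
    · intro w' hw'
      have h := hxopt w' hw'
      calc ∑ s : {r // r ∈ SR}, w' s * ∑ c : {c // c ∈ SC}, MR s.1 c.1 * y c
          = ∑ s : {r // r ∈ SR}, ∑ c : {c // c ∈ SC}, w' s * MR s.1 c.1 * y c := by
            apply Finset.sum_congr rfl
            intro s _
            rw [Finset.mul_sum]
            exact Finset.sum_congr rfl (fun c _ => by ring)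
        _ ≤ ∑ s : {r // r ∈ SR}, ∑ c : {c // c ∈ SC}, x s * MR s.1 c.1 * y c := h
        _ = ∑ s : {r // r ∈ SR}, x s * ∑ c : {c // c ∈ SC}, MR s.1 c.1 * y c := by
            apply Finset.sum_congr rfl
            intro s _
            rw [Finset.mul_sum]
            exact Finset.sum_congr rfl (fun c _ => by ring)
    · intro s; exact hx'.1 s.1
    · rw [Finset.sum_coe_sort SR x']
      rw [← hx'.2]
      exact Finset.sum_le_sum_of_subset_of_nonneg (Finset.subset_univ SR)
        (fun r _ _ => hx'.1 r)
  · -- column player optimality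
    intro y' hy'
    rw [redR MC hinC y', redR MC hinC ybar]
    simp only [hybar_sub]
    apply opt_of_submass_aux (fun c : {c // c ∈ SC} => ∑ r : {r // r ∈ SR}, x r * MC r.1 c.1)
    · intro c
      exact Finset.sum_nonneg (fun r _ => mul_nonneg (hxnn r) (hMCnn _ _))
    · intro w' hw'
      have h := hyopt w' hw'
      calc ∑ c : {c // c ∈ SC}, w' c * ∑ r : {r // r ∈ SR}, x r * MC r.1 c.1
          = ∑ r : {r // r ∈ SR}, ∑ c : {c // c ∈ SC}, x r * MC r.1 c.1 * w' c := by
            rw [Finset.sum_comm]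
            apply Finset.sum_congr rfl
            intro c _
            rw [Finset.mul_sum]
            exact Finset.sum_congr rfl (fun r _ => by ring)
        _ ≤ ∑ r : {r // r ∈ SR}, ∑ c : {c // c ∈ SC}, x r * MC r.1 c.1 * y c := h
        _ = ∑ c : {c // c ∈ SC}, y c * ∑ r : {r // r ∈ SR}, x r * MC r.1 c.1 := by
            rw [Finset.sum_comm]
            apply Finset.sum_congr rfl
            intro c _
            rw [Finset.mul_sum]
            exact Finset.sum_congr rfl (fun r _ => by ring)
    · intro c; exact hy'.1 c.1
    · rw [Finset.sum_coe_sort SC y']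
      rw [← hy'.2]
      exact Finset.sum_le_sum_of_subset_of_nonneg (Finset.subset_univ SC)
        (fun c _ _ => hy'.1 c)
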